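/- With the CGMY data below, define the characteristic exponent Ψ(u) := i·u·b̃ + C·Γ(-Y)·((M - i·u)^Y + (G + i·u)^Y - M^Y - G^Y) for u ∈ ℝ, using principal-branch complex powers. Then for every real u, lim_{t→0⁺} t·Ψ(t^{-1/Y}·u) = -σ_Y·|u|^Y (limit in ℂ). Consequently exp(t·Ψ(t^{-1/Y}·u)) converges to exp(-σ_Y·|u|^Y), the characteristic function of a symmetric Y-stable law, as t → 0⁺; this is the characteristic-function form of the weak convergence X_t/t^{1/Y} ⇒ Z for the CGMY process. -/

import Mathlib

open MeasureTheory Filter Topology Complex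

/-- The stable scale coefficient `σ_Y = 2·C·Γ(-Y)·|cos(πY/2)|`. -/
noncomputable def sigmaY (C Y : ℝ) : ℝ :=
  2 * C * Real.Gamma (-Y) * |Real.cos (Real.pi * Y / 2)|

/-- The martingale drift `b̃`. -/
noncomputable def btilde (C G M Y : ℝ) : ℝ :=
  -(C * Real.Gamma (-Y) * ((M - 1) ^ Y + (G + 1) ^ Y - M ^ Y - G ^ Y))

/-- The constant `κ = b̃/2 - C·Γ(-Y)·(M^Y + G^Y)`. -/
noncomputable def kappaC (C G M Y : ℝ) : ℝ :=
  btilde C G M Y / 2 - C * Real.Gamma (-Y) * (M ^ Y + G ^ Y)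

/-- The limiting stable exponent `θ₀(u) = -σ_Y·|u|^Y`. -/
noncomputable def theta0 (C Y : ℝ) (u : ℝ) : ℝ :=
  -(sigmaY C Y) * |u| ^ Y

/-- The contour-shifted characteristic exponent `ψ₀`. -/
noncomputable def psi0 (C G M Y : ℝ) (v : ℝ) : ℂ :=
  Complex.I * (v : ℂ) * ((btilde C G M Y : ℝ) : ℂ) + ((kappaC C G M Y : ℝ) : ℂ)
    + ((C * Real.Gamma (-Y) : ℝ) : ℂ) *
      ((((M - 1/2 : ℝ) : ℂ) - Complex.I * (v : ℂ)) ^ (Y : ℂ)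
        + (((G + 1/2 : ℝ) : ℂ) + Complex.I * (v : ℂ)) ^ (Y : ℂ))

/-- The rescaled exponent `θ(t,v)` in the Lipton–Lewis representation. -/
noncomputable def thetaT (C G M Y : ℝ) (t v : ℝ) : ℂ :=
  Complex.I * (v : ℂ) * ((btilde C G M Y : ℝ) : ℂ) * ((t ^ (1 - 1/Y) : ℝ) : ℂ)
    + ((kappaC C G M Y : ℝ) : ℂ) * (t : ℂ)
    + ((C * Real.Gamma (-Y) : ℝ) : ℂ) *
      (((((M - 1/2) * t ^ (1/Y) : ℝ) : ℂ) - Complex.I * (v : ℂ)) ^ (Y : ℂ)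
        + ((((G + 1/2) * t ^ (1/Y) : ℝ) : ℂ) + Complex.I * (v : ℂ)) ^ (Y : ℂ))

/-- The normalized Lipton–Lewis ATM factor `L(t)`. -/
noncomputable def LLfn (C G M Y : ℝ) (t : ℝ) : ℝ :=
  (1 / Real.pi) *
    (∫ v in Set.Ioi (0 : ℝ),
      (1 - Complex.exp (thetaT C G M Y t v)) / (((v ^ 2 + t ^ (2/Y) / 4 : ℝ)) : ℂ)).re

/-- The first-order coefficient `d₁`. -/
noncomputable def dOne (C Y : ℝ) : ℝ :=
  (1 / Real.pi) * Real.Gamma (1 - 1/Y) * (sigmaY C Y) ^ (1/Y)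

/-- The second-order coefficient `d₂`. -/
noncomputable def dTwo (C G M Y : ℝ) : ℝ :=
  (1 / Real.pi) * ∫ w in Set.Ioi (0 : ℝ),
    ((w ^ 2 + 1/4) * theta0 C Y w - w ^ 2 * (psi0 C G M Y w).re) / (w ^ 2 * (w ^ 2 + 1/4))

/-- The CGMY characteristic exponent `Ψ`. -/
noncomputable def PsiCGMY (C G M Y : ℝ) (u : ℝ) : ℂ :=
  Complex.I * (u : ℂ) * ((btilde C G M Y : ℝ) : ℂ)
    + ((C * Real.Gamma (-Y) : ℝ) : ℂ) *
      (((M : ℂ) - Complex.I * (u : ℂ)) ^ (Y : ℂ)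
        + ((G : ℂ) + Complex.I * (u : ℂ)) ^ (Y : ℂ)
        - ((M ^ Y : ℝ) : ℂ) - ((G ^ Y : ℝ) : ℂ))

/-- Stable-domain-of-attraction rescaling: for every real `u`,
`t·Ψ(t^{-1/Y}·u) → -σ_Y·|u|^Y` in `ℂ` as `t → 0⁺`, and consequently
`exp(t·Ψ(t^{-1/Y}·u)) → exp(-σ_Y·|u|^Y)`, the characteristic function of a
symmetric `Y`-stable law. -/

private lemma auxMulCpow {r : ℝ} (hr : 0 < r) (z : ℂ) (y : ℝ) :
    ((r : ℂ) * z) ^ (y : ℂ) = ((r ^ y : ℝ) : ℂ) * z ^ (y : ℂ) := by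
  rw [Complex.cpow_ofReal, Complex.cpow_ofReal, norm_mul, Complex.norm_real, Real.norm_eq_abs,
    abs_of_pos hr, Complex.arg_real_mul z hr, Real.mul_rpow hr.le (norm_nonneg z)]
  push_cast
  ring

private lemma auxSum (Y u : ℝ) (hY : Y ≠ 0) :
    (-(Complex.I * (u : ℂ))) ^ (Y : ℂ) + (Complex.I * (u : ℂ)) ^ (Y : ℂ)
      = ((2 * |u| ^ Y * Real.cos (Real.pi * Y / 2) : ℝ) : ℂ) := by
  have hpi : Real.pi * Y / 2 = Real.pi / 2 * Y := by ring
  rcases lt_trichotomy u 0 with h | rfl | h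
  · have h1 : Complex.I * (u : ℂ) = ((-u : ℝ) : ℂ) * (-Complex.I) := by push_cast; ring
    have h2 : -(((-u : ℝ) : ℂ) * (-Complex.I)) = ((-u : ℝ) : ℂ) * Complex.I := by
      push_cast; ring
    rw [h1, h2, Complex.cpow_ofReal, Complex.cpow_ofReal,
      Complex.arg_real_mul _ (by linarith : (0:ℝ) < -u),
      Complex.arg_real_mul _ (by linarith : (0:ℝ) < -u),
      Complex.arg_I, Complex.arg_neg_I, norm_mul, norm_mul, Complex.norm_real, Real.norm_eq_abs,
      Complex.norm_I, norm_neg, Complex.norm_I, abs_neg, abs_of_neg h, hpi,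
      neg_mul (Real.pi/2) Y, Real.cos_neg, Real.sin_neg]
    push_cast
    ring
  · rw [Complex.ofReal_zero, mul_zero, neg_zero, Complex.zero_cpow (by exact_mod_cast hY),
      abs_zero, Real.zero_rpow hY]
    norm_num
  · have h1 : Complex.I * (u : ℂ) = ((u : ℝ) : ℂ) * Complex.I := by push_cast; ring
    have h2 : -(((u : ℝ) : ℂ) * Complex.I) = ((u : ℝ) : ℂ) * (-Complex.I) := by
      push_cast; ring
    rw [h1, h2, Complex.cpow_ofReal, Complex.cpow_ofReal,
      Complex.arg_real_mul _ h, Complex.arg_real_mul _ h,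
      Complex.arg_I, Complex.arg_neg_I, norm_mul, norm_mul, Complex.norm_real, Real.norm_eq_abs,
      Complex.norm_I, norm_neg, Complex.norm_I, abs_of_pos h, hpi,
      neg_mul (Real.pi/2) Y, Real.cos_neg, Real.sin_neg]
    push_cast
    ring

theorem stmt16 (C G M Y : ℝ) (hC : 0 < C) (hG : 0 ≤ G) (hM : 1 < M)
    (hY1 : 1 < Y) (hY2 : Y < 2) :
    ∀ u : ℝ,
      Tendsto (fun t : ℝ => (t : ℂ) * PsiCGMY C G M Y (t ^ (-(1/Y)) * u))
        (𝓝[>] 0) (𝓝 (((-(sigmaY C Y) * |u| ^ Y : ℝ)) : ℂ)) ∧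
      Tendsto (fun t : ℝ => Complex.exp ((t : ℂ) * PsiCGMY C G M Y (t ^ (-(1/Y)) * u)))
        (𝓝[>] 0) (𝓝 (Complex.exp (((-(sigmaY C Y) * |u| ^ Y : ℝ)) : ℂ))) := by
  have hY0 : (0:ℝ) < Y := by linarith
  intro u
  set b : ℝ := btilde C G M Y with hb
  set cg : ℝ := C * Real.Gamma (-Y) with hcg
  -- limits of the rpow pieces
  have h0 : Tendsto (fun t : ℝ => t ^ (1/Y)) (𝓝[>] 0) (𝓝 0) := by
    have := (Real.continuousAt_rpow_const 0 (1/Y) (Or.inr (by positivity))).continuousWithinAt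
      (s := Set.Ioi (0:ℝ))
    simpa [ContinuousWithinAt, Real.zero_rpow (show (Y:ℝ)⁻¹ ≠ 0 by positivity)] using this
  have hpos : (0:ℝ) < 1 - 1/Y := by
    have : 1/Y < 1 := by rw [div_lt_one hY0]; linarith
    linarith
  have h1 : Tendsto (fun t : ℝ => t ^ (1 - 1/Y)) (𝓝[>] 0) (𝓝 0) := by
    have := (Real.continuousAt_rpow_const 0 (1 - 1/Y) (Or.inr hpos.le)).continuousWithinAt
      (s := Set.Ioi (0:ℝ))
    simpa [ContinuousWithinAt,
      Real.zero_rpow (show (1:ℝ) - Y⁻¹ ≠ 0 by rw [one_div] at hpos; linarith)] using this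
  -- algebraic identity on (0,∞)
  have key : ∀ t ∈ Set.Ioi (0:ℝ),
      (t : ℂ) * PsiCGMY C G M Y (t ^ (-(1/Y)) * u)
        = ((t ^ (1 - 1/Y) : ℝ) : ℂ) * (Complex.I * (u:ℂ) * ((b:ℝ):ℂ))
          + ((cg : ℝ) : ℂ) *
            ((((M * t ^ (1/Y) : ℝ) : ℂ) - Complex.I * (u:ℂ)) ^ (Y : ℂ)
              + (((G * t ^ (1/Y) : ℝ) : ℂ) + Complex.I * (u:ℂ)) ^ (Y : ℂ)
              - (t:ℂ) * ((M ^ Y : ℝ) : ℂ) - (t:ℂ) * ((G ^ Y : ℝ) : ℂ)) := by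
    intro t ht
    have ht : (0:ℝ) < t := ht
    have hr : (0:ℝ) < t ^ (1/Y) := Real.rpow_pos_of_pos ht _
    have hrY : (t ^ (1/Y)) ^ Y = t := by
      rw [← Real.rpow_mul ht.le, one_div, inv_mul_cancel₀ hY0.ne', Real.rpow_one]
    have hrmul : t ^ (1/Y) * (t ^ (-(1/Y)) * u) = u := by
      rw [← mul_assoc, ← Real.rpow_add ht]
      norm_num
    have hrmulC : ((t ^ (1/Y) : ℝ):ℂ) * ((t ^ (-(1/Y)) * u : ℝ):ℂ) = (u:ℂ) := by
      rw [← Complex.ofReal_mul, hrmul]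
    have htC : (t:ℂ) = (((t ^ (1/Y)) ^ Y : ℝ) : ℂ) := by rw [hrY]
    have e1 : (t:ℂ) * (((M:ℂ) - Complex.I * ((t ^ (-(1/Y)) * u : ℝ):ℂ)) ^ (Y:ℂ))
        = ((((M * t ^ (1/Y) : ℝ):ℂ) - Complex.I * (u:ℂ)) ^ (Y:ℂ)) := by
      have hbase : ((t ^ (1/Y) : ℝ):ℂ) * ((M:ℂ) - Complex.I * ((t ^ (-(1/Y)) * u : ℝ):ℂ))
          = ((M * t ^ (1/Y) : ℝ):ℂ) - Complex.I * (u:ℂ) := by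
        push_cast at hrmulC ⊢
        linear_combination (-Complex.I) * hrmulC
      rw [htC, Complex.ofReal_cpow hr.le, ← Complex.ofReal_cpow hr.le, ← auxMulCpow hr, hbase]
    have e2 : (t:ℂ) * (((G:ℂ) + Complex.I * ((t ^ (-(1/Y)) * u : ℝ):ℂ)) ^ (Y:ℂ))
        = ((((G * t ^ (1/Y) : ℝ):ℂ) + Complex.I * (u:ℂ)) ^ (Y:ℂ)) := by
      have hbase : ((t ^ (1/Y) : ℝ):ℂ) * ((G:ℂ) + Complex.I * ((t ^ (-(1/Y)) * u : ℝ):ℂ))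
          = ((G * t ^ (1/Y) : ℝ):ℂ) + Complex.I * (u:ℂ) := by
        push_cast at hrmulC ⊢
        linear_combination Complex.I * hrmulC
      rw [htC, Complex.ofReal_cpow hr.le, ← Complex.ofReal_cpow hr.le, ← auxMulCpow hr, hbase]
    have hdrift : (t:ℂ) * ((t ^ (-(1/Y)) * u : ℝ):ℂ) = ((t ^ (1 - 1/Y) : ℝ):ℂ) * (u:ℂ) := by
      have hre : t * (t ^ (-(1/Y)) * u) = t ^ (1 - 1/Y) * u := by
        rw [← mul_assoc]
        congr 1
        rw [show t * t ^ (-(1/Y)) = t ^ (1:ℝ) * t ^ (-(1/Y)) by rw [Real.rpow_one],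
          ← Real.rpow_add ht]
        congr 1
      calc (t:ℂ) * ((t ^ (-(1/Y)) * u : ℝ):ℂ)
          = ((t * (t ^ (-(1/Y)) * u) : ℝ):ℂ) := by push_cast; ring
        _ = ((t ^ (1 - 1/Y) * u : ℝ):ℂ) := by rw [hre]
        _ = ((t ^ (1 - 1/Y) : ℝ):ℂ) * (u:ℂ) := by push_cast; ring
    rw [PsiCGMY]
    linear_combination (Complex.I * ((b:ℝ):ℂ)) * hdrift + ((cg:ℝ):ℂ) * e1 + ((cg:ℝ):ℂ) * e2
  -- limits of each piece of the RHS
  have tA : Tendsto (fun t : ℝ => ((t ^ (1 - 1/Y) : ℝ):ℂ)) (𝓝[>] 0) (𝓝 0) := by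
    have := (Complex.continuous_ofReal.tendsto 0).comp h1
    simpa [Function.comp_def] using this
  have tBM : Tendsto (fun t : ℝ => ((M * t ^ (1/Y) : ℝ):ℂ) - Complex.I * (u:ℂ))
      (𝓝[>] 0) (𝓝 (-(Complex.I * (u:ℂ)))) := by
    have hm : Tendsto (fun t : ℝ => M * t ^ (1/Y)) (𝓝[>] 0) (𝓝 0) := by
      simpa using h0.const_mul M
    have := ((Complex.continuous_ofReal.tendsto 0).comp hm).sub_const (Complex.I * (u:ℂ))
    simpa using this
  have tBG : Tendsto (fun t : ℝ => ((G * t ^ (1/Y) : ℝ):ℂ) + Complex.I * (u:ℂ))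
      (𝓝[>] 0) (𝓝 (Complex.I * (u:ℂ))) := by
    have hg : Tendsto (fun t : ℝ => G * t ^ (1/Y)) (𝓝[>] 0) (𝓝 0) := by
      simpa using h0.const_mul G
    have := ((Complex.continuous_ofReal.tendsto 0).comp hg).add_const (Complex.I * (u:ℂ))
    simpa using this
  have hcont1 : ContinuousAt (fun z : ℂ => z ^ (Y:ℂ)) (-(Complex.I * (u:ℂ))) := by
    apply Complex.continuousAt_cpow_const_of_re_pos
    · left; simp
    · simpa using hY0
  have hcont2 : ContinuousAt (fun z : ℂ => z ^ (Y:ℂ)) (Complex.I * (u:ℂ)) := by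
    apply Complex.continuousAt_cpow_const_of_re_pos
    · left; simp
    · simpa using hY0
  have tP : Tendsto (fun t : ℝ => (((M * t ^ (1/Y) : ℝ):ℂ) - Complex.I * (u:ℂ)) ^ (Y:ℂ))
      (𝓝[>] 0) (𝓝 ((-(Complex.I * (u:ℂ))) ^ (Y:ℂ))) := hcont1.tendsto.comp tBM
  have tQ : Tendsto (fun t : ℝ => (((G * t ^ (1/Y) : ℝ):ℂ) + Complex.I * (u:ℂ)) ^ (Y:ℂ))
      (𝓝[>] 0) (𝓝 ((Complex.I * (u:ℂ)) ^ (Y:ℂ))) := hcont2.tendsto.comp tBG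
  have tm : Tendsto (fun t : ℝ => (t:ℂ) * ((M ^ Y : ℝ):ℂ)) (𝓝[>] 0) (𝓝 0) := by
    have : Continuous (fun t : ℝ => (t:ℂ) * ((M ^ Y : ℝ):ℂ)) :=
      Complex.continuous_ofReal.mul continuous_const
    have := (this.tendsto 0).mono_left (nhdsWithin_le_nhds (s := Set.Ioi (0:ℝ)))
    simpa using this
  have tg : Tendsto (fun t : ℝ => (t:ℂ) * ((G ^ Y : ℝ):ℂ)) (𝓝[>] 0) (𝓝 0) := by
    have : Continuous (fun t : ℝ => (t:ℂ) * ((G ^ Y : ℝ):ℂ)) :=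
      Complex.continuous_ofReal.mul continuous_const
    have := (this.tendsto 0).mono_left (nhdsWithin_le_nhds (s := Set.Ioi (0:ℝ)))
    simpa using this
  have total := (tA.mul (tendsto_const_nhds (x := Complex.I * (u:ℂ) * ((b:ℝ):ℂ)))).add
    ((((tP.add tQ).sub tm).sub tg).const_mul ((cg:ℝ):ℂ))
  have hval : (0:ℂ) * (Complex.I * (u:ℂ) * ((b:ℝ):ℂ))
      + ((cg:ℝ):ℂ) * ((-(Complex.I * (u:ℂ))) ^ (Y:ℂ) + (Complex.I * (u:ℂ)) ^ (Y:ℂ) - 0 - 0)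
      = ((-(sigmaY C Y) * |u| ^ Y : ℝ) : ℂ) := by
    rw [auxSum Y u hY0.ne']
    have hcos : Real.cos (Real.pi * Y / 2) ≤ 0 :=
      Real.cos_nonpos_of_pi_div_two_le_of_le (by nlinarith [Real.pi_pos])
        (by nlinarith [Real.pi_pos])
    rw [hcg, sigmaY, abs_of_nonpos hcos]
    push_cast
    ring
  rw [hval] at total
  have main : Tendsto (fun t : ℝ => (t : ℂ) * PsiCGMY C G M Y (t ^ (-(1/Y)) * u))
      (𝓝[>] 0) (𝓝 (((-(sigmaY C Y) * |u| ^ Y : ℝ)) : ℂ)) := by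
    refine total.congr' ?_
    filter_upwards [self_mem_nhdsWithin] with t ht using (key t ht).symm
  exact ⟨main, (Complex.continuous_exp.tendsto _).comp main⟩
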